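/- If a finite-dimensional algebra Λ (given as the path algebra of a bound quiver) is hom-irreducible, then Λ is ext-irreducible. -/

import Mathlib

/-!
Formalization of a statement from:
"Algebras with irreducible module varieties: two-vertex case completed"
-/

universe u v

open Quiver

noncomputable section

/-- The Zariski topology on the affine coordinate space `ι → k`: it is generated by the
basic open sets `{x | p(x) ≠ 0}` for multivariate polynomials `p`. -/
def zariskiTop (k : Type u) [CommSemiring k] (ι : Type v) : TopologicalSpace (ι → k) :=
  TopologicalSpace.generateFrom
    {U | ∃ p : MvPolynomial ι k, U = {x | MvPolynomial.eval x p ≠ 0}}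

section QuiverRep

variable (k : Type u) [Field k] (V : Type) [Quiver.{0} V]

/-- The space of representations of the quiver `V` with dimension vector `d`:
a matrix of size `d b × d a` for every arrow `a ⟶ b`. -/
def RepM (d : V → ℕ) : Type u :=
  ∀ a b : V, (a ⟶ b) → Matrix (Fin (d b)) (Fin (d a)) k

variable {k V}

/-- Evaluation of a representation on a path: the product of the matrices attached to
the arrows of the path. -/
def evalPath {d : V → ℕ} (M : RepM k V d) :
    ∀ {a b : V}, Path a b → Matrix (Fin (d b)) (Fin (d a)) k
  | _, _, Path.nil => 1
  | _, _, Path.cons p α => M _ _ α * evalPath M p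

variable (k V)

/-- A relation of the quiver `V` from `a` to `b`: a `k`-linear combination of paths from
`a` to `b`, all of length at least `2`. -/
structure RelData (a b : V) : Type u where
  coeff : Path a b →₀ k
  len : ∀ p ∈ coeff.support, 2 ≤ p.length

/-- The type of relations of the quiver `V` (with arbitrary endpoints: the first
component is the starting vertex, the second one the terminating vertex). -/
def Rels : Type u := (a : V) × (b : V) × RelData k V a b

variable {k V}

/-- Evaluation of a relation on a representation. -/
def relEval {d : V → ℕ} (M : RepM k V d) {a b : V} (r : RelData k V a b) :
    Matrix (Fin (d b)) (Fin (d a)) k :=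
  r.coeff.sum fun p c => c • evalPath M p

/-- The degree of a path: the number of its arrows which are not loops. -/
def pathDeg [DecidableEq V] : ∀ {a b : V}, Path a b → ℕ
  | _, _, Path.nil => 0
  | _, c, Path.cons (b := b) p _ => pathDeg p + (if b = c then 0 else 1)

/-- The degree of a relation: the minimum of the degrees of the paths occurring in it. -/
def relDeg [DecidableEq V] {a b : V} (r : RelData k V a b) : ℕ :=
  sInf (pathDeg '' (r.coeff.support : Set (Path a b)))

variable (k V)

/-- The representation variety `rep(d)` of the bound quiver `(V, R)`: the representations
annihilating all the relations in `R`. -/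
def repSet (R : Set (Rels k V)) (d : V → ℕ) : Set (RepM k V d) :=
  {M | ∀ r ∈ R, relEval M r.2.2 = 0}

/-- The index type for the affine coordinates on the space of representations. -/
def RepIdx (d : V → ℕ) : Type :=
  (a : V) × (b : V) × ((a ⟶ b) × (Fin (d b) × Fin (d a)))

variable {k V}

/-- The affine coordinates on the space of representations. -/
def repCoords {d : V → ℕ} (M : RepM k V d) : RepIdx V d → k :=
  fun x => M x.1 x.2.1 x.2.2.1 x.2.2.2.1 x.2.2.2.2

variable (k V)

/-- The Zariski topology on the space of representations. -/
def repTop (d : V → ℕ) : TopologicalSpace (RepM k V d) :=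
  (zariskiTop k _).induced repCoords

end QuiverRep

section HME

variable (k : Type u) [Field k] (V : Type) [Quiver.{0} V]

/-- The ambient space of the variety `H(e,d)` of homomorphisms: a representation with
dimension vector `e`, a representation with dimension vector `d`, and a matrix `f x` of
size `d x × e x` for every vertex `x`. -/
def HomSpace (e d : V → ℕ) : Type u :=
  RepM k V e × RepM k V d × ((x : V) → Matrix (Fin (d x)) (Fin (e x)) k)

/-- The index type for the affine coordinates on `HomSpace`. -/
def HomIdx (e d : V → ℕ) : Type :=
  RepIdx V e ⊕ RepIdx V d ⊕ ((x : V) × (Fin (d x) × Fin (e x)))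

variable {k V} in
/-- The affine coordinates on `HomSpace`. -/
def homCoords {e d : V → ℕ} (z : HomSpace k V e d) : HomIdx V e d → k
  | Sum.inl i => repCoords z.1 i
  | Sum.inr (Sum.inl i) => repCoords z.2.1 i
  | Sum.inr (Sum.inr x) => z.2.2 x.1 x.2.1 x.2.2

/-- The Zariski topology on `HomSpace`. -/
def homTop (e d : V → ℕ) : TopologicalSpace (HomSpace k V e d) :=
  (zariskiTop k _).induced homCoords

/-- The variety `H(e,d)` of the bound quiver `(V, R)`: the triples `(U, W, f)` where `U`,
`W` are representations of the bound quiver with dimension vectors `e` and `d`, and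
`f : U → W` is a homomorphism of representations. -/
def homSet (R : Set (Rels k V)) (e d : V → ℕ) : Set (HomSpace k V e d) :=
  {z | z.1 ∈ repSet k V R e ∧ z.2.1 ∈ repSet k V R d ∧
    ∀ (a b : V) (α : a ⟶ b), z.2.1 a b α * z.2.2 a = z.2.2 b * z.1 a b α}

/-- The variety `M(e,d)` of the bound quiver `(V, R)`: the triples `(U, W, f)` in
`H(e,d)` such that moreover every `f x` is injective (as a linear map). -/
def monoSet (R : Set (Rels k V)) (e d : V → ℕ) : Set (HomSpace k V e d) :=
  {z | z ∈ homSet k V R e d ∧ ∀ x : V, Function.Injective (z.2.2 x).mulVecLin}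

/-- The algebra presented by the bound quiver `(V, R)` is hom-irreducible if all the
varieties `H(e,d)` are irreducible. -/
def HomIrreducible (R : Set (Rels k V)) : Prop :=
  ∀ e d : V → ℕ, @IsIrreducible _ (homTop k V e d) (homSet k V R e d)

/-- The algebra presented by the bound quiver `(V, R)` is mono-irreducible if all the
varieties `M(e,d)` with `e ≤ d` are irreducible. -/
def MonoIrreducible (R : Set (Rels k V)) : Prop :=
  ∀ e d : V → ℕ, (∀ x, e x ≤ d x) →
    @IsIrreducible _ (homTop k V e d) (monoSet k V R e d)

/-- The space of cocycle data `Z`: a matrix `Z α` of size `d b × e a` for every arrow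
`α : a ⟶ b`. -/
def ZSpace (e d : V → ℕ) : Type u :=
  ∀ a b : V, (a ⟶ b) → Matrix (Fin (d b)) (Fin (e a)) k

variable {k V} in
/-- For representations `Mv` (dimension vector `d`) and `Mu` (dimension vector `e`) and
cocycle data `Z`, the value of the cocycle `Z^{U,V}` on a path: for a path `α₁ ⋯ α_l` it
is `∑_j V_{α₁} ⋯ V_{α_{j-1}} · Z_{α_j} · U_{α_{j+1}} ⋯ U_{α_l}`. -/
def zEvalPath {e d : V → ℕ} (Mv : RepM k V d) (Mu : RepM k V e) (Z : ZSpace k V e d) :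
    ∀ {a b : V}, Path a b → Matrix (Fin (d b)) (Fin (e a)) k
  | _, _, Path.nil => 0
  | _, _, Path.cons p α => Mv _ _ α * zEvalPath Mv Mu Z p + Z _ _ α * evalPath Mu p

variable {k V} in
/-- The value of the cocycle `Z^{U,V}` on a relation. -/
def zRelEval {e d : V → ℕ} (Mv : RepM k V d) (Mu : RepM k V e) (Z : ZSpace k V e d)
    {a b : V} (r : RelData k V a b) : Matrix (Fin (d b)) (Fin (e a)) k :=
  r.coeff.sum fun p c => c • zEvalPath Mv Mu Z p

/-- The ambient space of the variety `E(e,d)`: triples `(U, V, Z)`. -/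
def ExtSpace (e d : V → ℕ) : Type u :=
  RepM k V e × RepM k V d × ZSpace k V e d

/-- The index type for the affine coordinates on `ExtSpace`. -/
def ExtIdx (e d : V → ℕ) : Type :=
  RepIdx V e ⊕ RepIdx V d ⊕ ((a : V) × (b : V) × ((a ⟶ b) × (Fin (d b) × Fin (e a))))

variable {k V} in
/-- The affine coordinates on `ExtSpace`. -/
def extCoords {e d : V → ℕ} (z : ExtSpace k V e d) : ExtIdx V e d → k
  | Sum.inl i => repCoords z.1 i
  | Sum.inr (Sum.inl i) => repCoords z.2.1 i
  | Sum.inr (Sum.inr x) => z.2.2 x.1 x.2.1 x.2.2.1 x.2.2.2.1 x.2.2.2.2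

/-- The Zariski topology on `ExtSpace`. -/
def extTop (e d : V → ℕ) : TopologicalSpace (ExtSpace k V e d) :=
  (zariskiTop k _).induced extCoords

/-- The variety `E(e,d)` of the bound quiver `(V, R)`: the triples `(U, V, Z)` where `U`,
`V` are representations of the bound quiver with dimension vectors `e` and `d`, and the
cocycle `Z^{U,V}` vanishes on all the defining relations. -/
def extSet (R : Set (Rels k V)) (e d : V → ℕ) : Set (ExtSpace k V e d) :=
  {z | z.1 ∈ repSet k V R e ∧ z.2.1 ∈ repSet k V R d ∧
    ∀ r ∈ R, zRelEval z.2.1 z.1 z.2.2 r.2.2 = 0}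

/-- The algebra presented by the bound quiver `(V, R)` is ext-irreducible if all the
varieties `E(e,d)` are irreducible. -/
def ExtIrreducible (R : Set (Rels k V)) : Prop :=
  ∀ e d : V → ℕ, @IsIrreducible _ (extTop k V e d) (extSet k V R e d)

end HME

section PathAlgebra

variable (k : Type u) [Field k] (V : Type) [Quiver.{0} V]

/-- Generators of the path algebra of the quiver `V`: one generator for every vertex (its
trivial path) and one for every arrow. -/
inductive PGen : Type
  | vert (a : V)
  | arr {a b : V} (α : a ⟶ b)

open FreeAlgebra in
/-- The defining relations of the path algebra of a quiver: the trivial paths form a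
complete set of orthogonal idempotents summing to `1`, and the trivial paths act as
identities on the adjacent arrows. -/
inductive PARel : FreeAlgebra k (PGen V) → FreeAlgebra k (PGen V) → Prop
  | idem (a : V) : PARel (ι k (PGen.vert a) * ι k (PGen.vert a)) (ι k (PGen.vert a))
  | orth (a b : V) (h : a ≠ b) : PARel (ι k (PGen.vert a) * ι k (PGen.vert b)) 0
  | vsum : PARel (∑ᶠ a : V, ι k (PGen.vert a)) 1
  | arrL {a b : V} (α : a ⟶ b) :
      PARel (ι k (PGen.vert b) * ι k (PGen.arr α)) (ι k (PGen.arr α))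
  | arrR {a b : V} (α : a ⟶ b) :
      PARel (ι k (PGen.arr α) * ι k (PGen.vert a)) (ι k (PGen.arr α))

/-- The path algebra of the quiver `V` over `k`. -/
abbrev PathAlg : Type u := RingQuot (PARel k V)

/-- The canonical projection from the free algebra onto the path algebra. -/
def paMk : FreeAlgebra k (PGen V) →ₐ[k] PathAlg k V :=
  RingQuot.mkAlgHom k (PARel k V)

/-- The element of the path algebra determined by a path of the quiver. -/
def pathElem : ∀ {a b : V}, Path a b → PathAlg k V
  | a, _, Path.nil => paMk k V (FreeAlgebra.ι k (PGen.vert a))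
  | _, _, Path.cons p α => paMk k V (FreeAlgebra.ι k (PGen.arr α)) * pathElem p

/-- The element of the path algebra determined by a relation. -/
def relElem {a b : V} (r : RelData k V a b) : PathAlg k V :=
  r.coeff.sum fun p c => c • pathElem k V p

/-- The algebra of the bound quiver `(V, R)`: the quotient of the path algebra of `V` by
the two-sided ideal generated by the relations in `R`. -/
abbrev BoundAlg (R : Set (Rels k V)) : Type u :=
  RingQuot (fun x y : PathAlg k V => (∃ r ∈ R, x = relElem k V r.2.2) ∧ y = 0)

/-- The canonical projection from the path algebra onto the algebra of a bound quiver. -/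
def baMk (R : Set (Rels k V)) : PathAlg k V →ₐ[k] BoundAlg k V R :=
  RingQuot.mkAlgHom k _

/-- The pair `(V, R)` is a bound quiver: all sufficiently long paths lie in the ideal
generated by the relations, i.e. their images vanish in `BoundAlg k V R`.  (Together
with the finiteness of the quiver this makes `BoundAlg k V R` finite-dimensional.) -/
def IsBoundQuiver (R : Set (Rels k V)) : Prop :=
  ∃ N : ℕ, ∀ (a b : V) (p : Path a b), N ≤ p.length → baMk k V R (pathElem k V p) = 0

/-- `R` is a minimal set of relations: no relation of `R` lies in the two-sided ideal
generated by the remaining ones. -/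
def MinimalRels (R : Set (Rels k V)) : Prop :=
  ∀ r ∈ R, baMk k V (R \ {r}) (relElem k V r.2.2) ≠ 0

end PathAlgebra
namespace Stmt7
set_option linter.unusedSectionVars false

variable {k : Type*} [Field k]

/-- Assemble a matrix from four blocks, with `Fin`-indexing. -/
def fb {m n p q : ℕ} (A : Matrix (Fin m) (Fin p) k) (B : Matrix (Fin m) (Fin q) k)
    (C : Matrix (Fin n) (Fin p) k) (D : Matrix (Fin n) (Fin q) k) :
    Matrix (Fin (m + n)) (Fin (p + q)) k :=
  Matrix.of fun i j =>
    Fin.addCases (fun i' => Fin.addCases (fun j' => A i' j') (fun j' => B i' j') j)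
      (fun i' => Fin.addCases (fun j' => C i' j') (fun j' => D i' j') j) i

variable {m n p q r s : ℕ}

@[simp] lemma fb_apply11 (A : Matrix (Fin m) (Fin p) k) (B : Matrix (Fin m) (Fin q) k)
    (C : Matrix (Fin n) (Fin p) k) (D : Matrix (Fin n) (Fin q) k) (i j) :
    fb A B C D (Fin.castAdd n i) (Fin.castAdd q j) = A i j := by
  simp [fb]

@[simp] lemma fb_apply12 (A : Matrix (Fin m) (Fin p) k) (B : Matrix (Fin m) (Fin q) k)
    (C : Matrix (Fin n) (Fin p) k) (D : Matrix (Fin n) (Fin q) k) (i j) :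
    fb A B C D (Fin.castAdd n i) (Fin.natAdd p j) = B i j := by
  simp [fb]

@[simp] lemma fb_apply21 (A : Matrix (Fin m) (Fin p) k) (B : Matrix (Fin m) (Fin q) k)
    (C : Matrix (Fin n) (Fin p) k) (D : Matrix (Fin n) (Fin q) k) (i j) :
    fb A B C D (Fin.natAdd m i) (Fin.castAdd q j) = C i j := by
  simp [fb]

@[simp] lemma fb_apply22 (A : Matrix (Fin m) (Fin p) k) (B : Matrix (Fin m) (Fin q) k)
    (C : Matrix (Fin n) (Fin p) k) (D : Matrix (Fin n) (Fin q) k) (i j) :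
    fb A B C D (Fin.natAdd m i) (Fin.natAdd p j) = D i j := by
  simp [fb]

/-- The four blocks of a matrix. -/
def blk11 (M : Matrix (Fin (m + n)) (Fin (p + q)) k) : Matrix (Fin m) (Fin p) k :=
  Matrix.of fun i j => M (Fin.castAdd n i) (Fin.castAdd q j)

def blk12 (M : Matrix (Fin (m + n)) (Fin (p + q)) k) : Matrix (Fin m) (Fin q) k :=
  Matrix.of fun i j => M (Fin.castAdd n i) (Fin.natAdd p j)

def blk21 (M : Matrix (Fin (m + n)) (Fin (p + q)) k) : Matrix (Fin n) (Fin p) k :=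
  Matrix.of fun i j => M (Fin.natAdd m i) (Fin.castAdd q j)

def blk22 (M : Matrix (Fin (m + n)) (Fin (p + q)) k) : Matrix (Fin n) (Fin q) k :=
  Matrix.of fun i j => M (Fin.natAdd m i) (Fin.natAdd p j)

lemma eq_fb_blk (M : Matrix (Fin (m + n)) (Fin (p + q)) k) :
    M = fb (blk11 M) (blk12 M) (blk21 M) (blk22 M) := by
  ext i j
  induction i using Fin.addCases with
  | left i => induction j using Fin.addCases with
    | left j => simp [blk11]
    | right j => simp [blk12]
  | right i => induction j using Fin.addCases with
    | left j => simp [blk21]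
    | right j => simp [blk22]

lemma fb_mul (A : Matrix (Fin m) (Fin p) k) (B : Matrix (Fin m) (Fin q) k)
    (C : Matrix (Fin n) (Fin p) k) (D : Matrix (Fin n) (Fin q) k)
    (A' : Matrix (Fin p) (Fin r) k) (B' : Matrix (Fin p) (Fin s) k)
    (C' : Matrix (Fin q) (Fin r) k) (D' : Matrix (Fin q) (Fin s) k) :
    fb A B C D * fb A' B' C' D'
      = fb (A * A' + B * C') (A * B' + B * D') (C * A' + D * C') (C * B' + D * D') := by
  ext i j
  induction i using Fin.addCases with
  | left i => induction j using Fin.addCases with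
    | left j => simp [Matrix.mul_apply, Matrix.add_apply, Fin.sum_univ_add, Finset.sum_add_distrib]
    | right j => simp [Matrix.mul_apply, Matrix.add_apply, Fin.sum_univ_add, Finset.sum_add_distrib]
  | right i => induction j using Fin.addCases with
    | left j => simp [Matrix.mul_apply, Matrix.add_apply, Fin.sum_univ_add, Finset.sum_add_distrib]
    | right j => simp [Matrix.mul_apply, Matrix.add_apply, Fin.sum_univ_add, Finset.sum_add_distrib]

lemma fb_one : fb (1 : Matrix (Fin m) (Fin m) k) 0 0 (1 : Matrix (Fin n) (Fin n) k)
    = (1 : Matrix (Fin (m + n)) (Fin (m + n)) k) := by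
  ext i j
  induction i using Fin.addCases with
  | left i => induction j using Fin.addCases with
    | left j =>
        simp only [fb_apply11, Matrix.one_apply]
        congr 1
        simp [Fin.ext_iff, eq_iff_iff]
    | right j =>
        simp only [fb_apply12, Matrix.zero_apply, Matrix.one_apply]
        rw [if_neg]
        simp only [Fin.ext_iff, Fin.coe_castAdd, Fin.coe_natAdd]
        omega
  | right i => induction j using Fin.addCases with
    | left j =>
        simp only [fb_apply21, Matrix.zero_apply, Matrix.one_apply]
        rw [if_neg]
        simp only [Fin.ext_iff, Fin.coe_castAdd, Fin.coe_natAdd]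
        omega
    | right j =>
        simp only [fb_apply22, Matrix.one_apply]
        congr 1
        simp [Fin.ext_iff, eq_iff_iff]

lemma fb_smul (c : k) (A : Matrix (Fin m) (Fin p) k) (B : Matrix (Fin m) (Fin q) k)
    (C : Matrix (Fin n) (Fin p) k) (D : Matrix (Fin n) (Fin q) k) :
    c • fb A B C D = fb (c • A) (c • B) (c • C) (c • D) := by
  ext i j
  induction i using Fin.addCases with
  | left i => induction j using Fin.addCases with
    | left j => simp
    | right j => simp
  | right i => induction j using Fin.addCases with
    | left j => simp
    | right j => simp

lemma fb_sum {ι : Type*} (t : Finset ι)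
    (A : ι → Matrix (Fin m) (Fin p) k) (B : ι → Matrix (Fin m) (Fin q) k)
    (C : ι → Matrix (Fin n) (Fin p) k) (D : ι → Matrix (Fin n) (Fin q) k) :
    ∑ x ∈ t, fb (A x) (B x) (C x) (D x)
      = fb (∑ x ∈ t, A x) (∑ x ∈ t, B x) (∑ x ∈ t, C x) (∑ x ∈ t, D x) := by
  ext i j
  induction i using Fin.addCases with
  | left i => induction j using Fin.addCases with
    | left j => simp [Matrix.sum_apply]
    | right j => simp [Matrix.sum_apply]
  | right i => induction j using Fin.addCases with
    | left j => simp [Matrix.sum_apply]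
    | right j => simp [Matrix.sum_apply]

/-- Left column-block of a matrix. -/
def cL (N : Matrix (Fin m) (Fin (p + q)) k) : Matrix (Fin m) (Fin p) k :=
  Matrix.of fun i j => N i (Fin.castAdd q j)

def cR (N : Matrix (Fin m) (Fin (p + q)) k) : Matrix (Fin m) (Fin q) k :=
  Matrix.of fun i j => N i (Fin.natAdd p j)

lemma cL_mul (A : Matrix (Fin r) (Fin m) k) (N : Matrix (Fin m) (Fin (p + q)) k) :
    cL (A * N) = A * cL N := by
  ext i j; simp [cL, Matrix.mul_apply]

lemma cR_mul (A : Matrix (Fin r) (Fin m) k) (N : Matrix (Fin m) (Fin (p + q)) k) :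
    cR (A * N) = A * cR N := by
  ext i j; simp [cR, Matrix.mul_apply]

lemma cL_mul_blk (N : Matrix (Fin m) (Fin (p + q)) k)
    (M : Matrix (Fin (p + q)) (Fin (r + s)) k) :
    cL (N * M) = cL N * blk11 M + cR N * blk21 M := by
  ext i j
  simp [cL, cR, blk11, blk21, Matrix.mul_apply, Matrix.add_apply, Fin.sum_univ_add]

lemma cR_mul_blk (N : Matrix (Fin m) (Fin (p + q)) k)
    (M : Matrix (Fin (p + q)) (Fin (r + s)) k) :
    cR (N * M) = cL N * blk12 M + cR N * blk22 M := by
  ext i j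
  simp [cL, cR, blk12, blk22, Matrix.mul_apply, Matrix.add_apply, Fin.sum_univ_add]

lemma col_ext {N N' : Matrix (Fin m) (Fin (p + q)) k}
    (h1 : cL N = cL N') (h2 : cR N = cR N') : N = N' := by
  ext i j
  induction j using Fin.addCases with
  | left j => exact congrFun (congrFun h1 i) j
  | right j => exact congrFun (congrFun h2 i) j


section QuiverLemmas

variable {k : Type u} [Field k] {V : Type} [Quiver.{0} V]

lemma evalPath_nil {dd : V → ℕ} (M : RepM k V dd) (a : V) :
    evalPath M (Path.nil : Path a a) = 1 := by simp [evalPath]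

lemma evalPath_cons {dd : V → ℕ} (M : RepM k V dd) {a b c : V} (p : Path a b) (α : b ⟶ c) :
    evalPath M (p.cons α) = M b c α * evalPath M p := by simp [evalPath]

lemma zEvalPath_nil {e d : V → ℕ} (Mv : RepM k V d) (Mu : RepM k V e) (Z : ZSpace k V e d)
    (a : V) : zEvalPath Mv Mu Z (Path.nil : Path a a) = 0 := by simp [zEvalPath]

lemma zEvalPath_cons {e d : V → ℕ} (Mv : RepM k V d) (Mu : RepM k V e) (Z : ZSpace k V e d)
    {a b c : V} (p : Path a b) (α : b ⟶ c) :
    zEvalPath Mv Mu Z (p.cons α)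
      = Mv b c α * zEvalPath Mv Mu Z p + Z b c α * evalPath Mu p := by
  simp [zEvalPath]

/-- The block-triangular representation built from `Mv`, `Mu` and cocycle data `Z`. -/
def fbRep {dv ev : V → ℕ} (Mv : RepM k V dv) (Mu : RepM k V ev) (Z : ZSpace k V ev dv) :
    RepM k V (fun x => dv x + ev x) :=
  fun a b α => fb (Mv a b α) (Z a b α) 0 (Mu a b α)

lemma evalPath_fbRep {dv ev : V → ℕ} (Mv : RepM k V dv) (Mu : RepM k V ev)
    (Z : ZSpace k V ev dv) {a b : V} (p : Path a b) :
    evalPath (fbRep Mv Mu Z) p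
      = fb (evalPath Mv p) (zEvalPath Mv Mu Z p) 0 (evalPath Mu p) := by
  induction p with
  | nil => rw [evalPath_nil, evalPath_nil, evalPath_nil, zEvalPath_nil, fb_one]
  | cons p α ih =>
      rw [evalPath_cons, evalPath_cons, evalPath_cons, zEvalPath_cons, ih]
      show fb _ _ _ _ * fb _ _ _ _ = _
      rw [fb_mul]
      simp only [Matrix.zero_mul, Matrix.mul_zero, add_zero, zero_add]

lemma relEval_fbRep {dv ev : V → ℕ} (Mv : RepM k V dv) (Mu : RepM k V ev)
    (Z : ZSpace k V ev dv) {a b : V} (r : RelData k V a b) :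
    relEval (fbRep Mv Mu Z) r
      = fb (relEval Mv r) (zRelEval Mv Mu Z r) 0 (relEval Mu r) := by
  have h : ∀ p ∈ r.coeff.support, r.coeff p • evalPath (fbRep Mv Mu Z) p
      = (fun (p : Path a b) (c : k) => fb (c • evalPath Mv p) (c • zEvalPath Mv Mu Z p)
          (c • (0 : Matrix _ _ k)) (c • evalPath Mu p)) p (r.coeff p) := fun p _ => by
    rw [evalPath_fbRep, fb_smul]
  rw [relEval, relEval, relEval, zRelEval,
    Finsupp.sum_congr (g2 := fun (p : Path a b) (c : k) => fb (c • evalPath Mv p)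
      (c • zEvalPath Mv Mu Z p) (c • (0 : Matrix _ _ k)) (c • evalPath Mu p)) h]
  unfold Finsupp.sum
  rw [fb_sum]
  simp

lemma evalPath_conj {dd : V → ℕ} (M : RepM k V dd)
    (T T' : ∀ x : V, Matrix (Fin (dd x)) (Fin (dd x)) k)
    (hT : ∀ x, T x * T' x = 1) (hT' : ∀ x, T' x * T x = 1) {a b : V} (p : Path a b) :
    evalPath (fun a b α => T b * M a b α * T' a : RepM k V dd) p
      = T b * evalPath M p * T' a := by
  induction p with
  | nil => erw [evalPath_nil, evalPath_nil, Matrix.mul_one, hT]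
  | cons p α ih =>
      erw [evalPath_cons, evalPath_cons, ih]
      simp only [Matrix.mul_assoc]
      rw [← Matrix.mul_assoc (T' _) (T _), hT', Matrix.one_mul]

lemma relEval_conj {dd : V → ℕ} (M : RepM k V dd)
    (T T' : ∀ x : V, Matrix (Fin (dd x)) (Fin (dd x)) k)
    (hT : ∀ x, T x * T' x = 1) (hT' : ∀ x, T' x * T x = 1) {a b : V} (r : RelData k V a b) :
    relEval (fun a b α => T b * M a b α * T' a : RepM k V dd) r
      = T b * relEval M r * T' a := by
  unfold relEval
  unfold Finsupp.sum
  rw [Matrix.mul_sum, Matrix.sum_mul]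
  refine Finset.sum_congr rfl fun p _ => ?_
  show r.coeff p • evalPath (fun a b α => T b * M a b α * T' a : RepM k V dd) p
    = T b * (r.coeff p • evalPath M p) * T' a
  rw [evalPath_conj M T T' hT hT', Matrix.mul_smul, Matrix.smul_mul]

lemma zero_mem_repSet (R : Set (Rels k V)) (dd : V → ℕ) :
    (fun _ _ _ => 0 : RepM k V dd) ∈ repSet k V R dd := by
  rintro ⟨a, b, rd⟩ _
  have h : ∀ p ∈ rd.coeff.support,
      rd.coeff p • evalPath (fun _ _ _ => 0 : RepM k V dd) p
        = (fun (_ : Path a b) (_ : k) => (0 : Matrix _ _ k)) p (rd.coeff p) := by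
    intro p hp
    have h2 := rd.len p hp
    cases p with
    | nil => simp [Quiver.Path.length] at h2
    | cons q α => erw [evalPath_cons]; simp
  show relEval (fun _ _ _ => 0 : RepM k V dd) rd = 0
  unfold relEval
  rw [Finsupp.sum_congr (g2 := fun (_ : Path a b) (_ : k) => (0 : Matrix _ _ k)) h,
    Finsupp.sum]; exact Finset.sum_const_zero

lemma zEvalPath_zero {e d : V → ℕ} {a b : V} (p : Path a b) :
    zEvalPath (fun _ _ _ => 0 : RepM k V d) (fun _ _ _ => 0 : RepM k V e)
      (fun _ _ _ => 0) p = 0 := by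
  induction p with
  | nil => erw [zEvalPath_nil]
  | cons p α ih => erw [zEvalPath_cons, ih]; simp

lemma zero_mem_extSet (R : Set (Rels k V)) (e d : V → ℕ) :
    ((fun _ _ _ => 0, fun _ _ _ => 0, fun _ _ _ => 0) : ExtSpace k V e d)
      ∈ extSet k V R e d := by
  refine ⟨zero_mem_repSet R e, zero_mem_repSet R d, ?_⟩
  rintro ⟨a, b, rd⟩ _
  show zRelEval (fun _ _ _ => 0 : RepM k V d) (fun _ _ _ => 0 : RepM k V e)
      (fun _ _ _ => 0) rd = 0
  have h : ∀ p ∈ rd.coeff.support, rd.coeff p •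
      zEvalPath (fun _ _ _ => 0 : RepM k V d) (fun _ _ _ => 0 : RepM k V e)
        (fun _ _ _ => 0) p
        = (fun (_ : Path a b) (_ : k) => (0 : Matrix _ _ k)) p (rd.coeff p) := fun p _ => by
    rw [zEvalPath_zero]; simp
  unfold zRelEval
  rw [Finsupp.sum_congr (g2 := fun (_ : Path a b) (_ : k) => (0 : Matrix _ _ k)) h,
    Finsupp.sum]; exact Finset.sum_const_zero

end QuiverLemmas
section Geometry

variable {k : Type u} [Field k] {V : Type} [Quiver.{0} V]

lemma fb_congr {m n p q : ℕ} {A A' : Matrix (Fin m) (Fin p) k} {B B' : Matrix (Fin m) (Fin q) k}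
    {C C' : Matrix (Fin n) (Fin p) k} {D D' : Matrix (Fin n) (Fin q) k}
    (hA : A = A') (hB : B = B') (hC : C = C') (hD : D = D') :
    fb A B C D = fb A' B' C' D' := by rw [hA, hB, hC, hD]

lemma blk11_fb {m n p q : ℕ} (A : Matrix (Fin m) (Fin p) k) (B : Matrix (Fin m) (Fin q) k)
    (C : Matrix (Fin n) (Fin p) k) (D : Matrix (Fin n) (Fin q) k) : blk11 (fb A B C D) = A := by
  ext i j; simp [blk11]

lemma blk12_fb {m n p q : ℕ} (A : Matrix (Fin m) (Fin p) k) (B : Matrix (Fin m) (Fin q) k)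
    (C : Matrix (Fin n) (Fin p) k) (D : Matrix (Fin n) (Fin q) k) : blk12 (fb A B C D) = B := by
  ext i j; simp [blk12]

lemma blk21_fb {m n p q : ℕ} (A : Matrix (Fin m) (Fin p) k) (B : Matrix (Fin m) (Fin q) k)
    (C : Matrix (Fin n) (Fin p) k) (D : Matrix (Fin n) (Fin q) k) : blk21 (fb A B C D) = C := by
  ext i j; simp [blk21]

lemma blk22_fb {m n p q : ℕ} (A : Matrix (Fin m) (Fin p) k) (B : Matrix (Fin m) (Fin q) k)
    (C : Matrix (Fin n) (Fin p) k) (D : Matrix (Fin n) (Fin q) k) : blk22 (fb A B C D) = D := by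
  ext i j; simp [blk22]

variable {e d : V → ℕ}

/-- Left block of the vertex maps of a triple in `HomSpace`. -/
abbrev pp1 (z : HomSpace k V (fun x => d x + e x) e) (x : V) :
    Matrix (Fin (e x)) (Fin (d x)) k := cL (z.2.2 x)

/-- Right (square) block of the vertex maps of a triple in `HomSpace`. -/
abbrev pp2 (z : HomSpace k V (fun x => d x + e x) e) (x : V) :
    Matrix (Fin (e x)) (Fin (e x)) k := cR (z.2.2 x)

/-- The Gaussian-elimination map from (an open part of) `H(d+e, e)` to `E(e, d)`. -/
def Gmap (e d : V → ℕ) (z : HomSpace k V (fun x => d x + e x) e) : ExtSpace k V e d :=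
  ⟨z.2.1,
   fun a b α => blk11 (z.1 a b α) - blk12 (z.1 a b α) * (pp2 z a)⁻¹ * pp1 z a,
   fun a b α => blk12 (z.1 a b α) * (pp2 z a)⁻¹⟩

/-- Block upper-triangularizing change of basis. -/
def Tmat (z : HomSpace k V (fun x => d x + e x) e) (x : V) :
    Matrix (Fin (d x + e x)) (Fin (d x + e x)) k :=
  fb 1 0 (pp1 z x) (pp2 z x)

def T'mat (z : HomSpace k V (fun x => d x + e x) e) (x : V) :
    Matrix (Fin (d x + e x)) (Fin (d x + e x)) k :=
  fb 1 0 (-((pp2 z x)⁻¹ * pp1 z x)) (pp2 z x)⁻¹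

/-- The domain of `Gmap`: homomorphisms whose right square block is invertible. -/
def Sset (R : Set (Rels k V)) (e d : V → ℕ) : Set (HomSpace k V (fun x => d x + e x) e) :=
  homSet k V R (fun x => d x + e x) e ∩ {z | ∀ x, IsUnit (pp2 z x).det}

lemma TT' (z : HomSpace k V (fun x => d x + e x) e) (hdet : ∀ x, IsUnit (pp2 z x).det)
    (x : V) : Tmat z x * T'mat z x = 1 := by
  unfold Tmat T'mat
  rw [fb_mul, ← fb_one]
  refine fb_congr (by simp) (by simp) ?_ (by simp [Matrix.mul_nonsing_inv _ (hdet x)])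
  rw [Matrix.mul_one, Matrix.mul_neg, ← Matrix.mul_assoc,
    Matrix.mul_nonsing_inv _ (hdet x), Matrix.one_mul]
  simp

lemma T'T (z : HomSpace k V (fun x => d x + e x) e) (hdet : ∀ x, IsUnit (pp2 z x).det)
    (x : V) : T'mat z x * Tmat z x = 1 := by
  unfold Tmat T'mat
  rw [fb_mul, ← fb_one]
  refine fb_congr (by simp) (by simp) ?_ (by simp [Matrix.nonsing_inv_mul _ (hdet x)])
  rw [Matrix.mul_one]
  simp

lemma conj_blocks (z : HomSpace k V (fun x => d x + e x) e)
    (hf : ∀ (a b : V) (α : a ⟶ b), z.2.1 a b α * z.2.2 a = z.2.2 b * z.1 a b α)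
    (hdet : ∀ x, IsUnit (pp2 z x).det) (a b : V) (α : a ⟶ b) :
    Tmat z b * z.1 a b α * T'mat z a
      = fb ((Gmap e d z).2.1 a b α) ((Gmap e d z).2.2 a b α) 0 (z.2.1 a b α) := by
  have h1 : z.2.1 a b α * pp1 z a
      = pp1 z b * blk11 (z.1 a b α) + pp2 z b * blk21 (z.1 a b α) := by
    have h := congrArg cL (hf a b α); rwa [cL_mul, cL_mul_blk] at h
  have h2 : z.2.1 a b α * pp2 z a
      = pp1 z b * blk12 (z.1 a b α) + pp2 z b * blk22 (z.1 a b α) := by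
    have h := congrArg cR (hf a b α); rwa [cR_mul, cR_mul_blk] at h
  unfold Tmat T'mat
  conv_lhs => rw [eq_fb_blk (z.1 a b α)]
  rw [fb_mul, fb_mul]
  refine fb_congr ?_ ?_ ?_ ?_
  · show _ = blk11 (z.1 a b α) - blk12 (z.1 a b α) * (pp2 z a)⁻¹ * pp1 z a
    simp [Matrix.mul_neg, Matrix.mul_assoc, sub_eq_add_neg]
  · show _ = blk12 (z.1 a b α) * (pp2 z a)⁻¹
    simp
  · rw [Matrix.mul_one, ← h1, ← h2, Matrix.mul_neg, Matrix.mul_assoc (z.2.1 a b α),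
      ← Matrix.mul_assoc (pp2 z a), Matrix.mul_nonsing_inv _ (hdet a), Matrix.one_mul]
    simp
  · rw [Matrix.mul_zero, zero_add, ← h2, Matrix.mul_assoc,
      Matrix.mul_nonsing_inv _ (hdet a), Matrix.mul_one]

lemma Gmap_mem_extSet (R : Set (Rels k V)) {z : HomSpace k V (fun x => d x + e x) e}
    (hz : z ∈ Sset R e d) : Gmap e d z ∈ extSet k V R e d := by
  obtain ⟨⟨hW, hU, hf⟩, hdet⟩ := hz
  have hconj : (fun a b α => Tmat z b * z.1 a b α * T'mat z a
        : RepM k V (fun x => d x + e x))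
      = fbRep (Gmap e d z).2.1 z.2.1 (Gmap e d z).2.2 := by
    funext a b α; exact conj_blocks z hf hdet a b α
  have h0 : ∀ r' ∈ R, relEval (fbRep (Gmap e d z).2.1 z.2.1 (Gmap e d z).2.2) r'.2.2 = 0 := by
    intro r' hr'
    have hc := relEval_conj z.1 (fun x => Tmat z x) (fun x => T'mat z x)
      (fun x => TT' z hdet x) (fun x => T'T z hdet x) r'.2.2
    rw [hconj] at hc
    rw [hc, hW r' hr']
    simp
  refine ⟨hU, ?_, ?_⟩
  · intro r' hr'
    have h := h0 r' hr'
    rw [relEval_fbRep] at h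
    have h' := congrArg blk11 h
    rwa [blk11_fb, show blk11 (0 : Matrix (Fin (d _ + e _)) (Fin (d _ + e _)) k) = 0
      from rfl] at h'
  · intro r' hr'
    have h := h0 r' hr'
    rw [relEval_fbRep] at h
    have h' := congrArg blk12 h
    rwa [blk12_fb, show blk12 (0 : Matrix (Fin (d _ + e _)) (Fin (d _ + e _)) k) = 0
      from rfl] at h'

/-- The canonical section of `Gmap`. -/
def emb (e d : V → ℕ) (w : ExtSpace k V e d) : HomSpace k V (fun x => d x + e x) e :=
  ⟨fbRep w.2.1 w.1 w.2.2, w.1,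
   fun x => Matrix.of fun i j =>
     Fin.addCases (fun _ => 0) (fun j' => (1 : Matrix (Fin (e x)) (Fin (e x)) k) i j') j⟩

lemma pp1_emb (w : ExtSpace k V e d) (x : V) : pp1 (emb e d w) x = 0 := by
  ext i j; simp [emb, cL]

lemma pp2_emb (w : ExtSpace k V e d) (x : V) : pp2 (emb e d w) x = 1 := by
  ext i j; simp [emb, cR]

lemma emb_mem (R : Set (Rels k V)) {w : ExtSpace k V e d} (hw : w ∈ extSet k V R e d) :
    emb e d w ∈ Sset R e d := by
  obtain ⟨hU, hV, hZ⟩ := hw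
  refine ⟨⟨?_, hU, ?_⟩, ?_⟩
  · intro r' hr'
    rw [show (emb e d w).1 = fbRep w.2.1 w.1 w.2.2 from rfl, relEval_fbRep,
      hU r' hr', hV r' hr', hZ r' hr']
    ext i j
    induction i using Fin.addCases with
    | left i => induction j using Fin.addCases with
      | left j => simp
      | right j => simp
    | right i => induction j using Fin.addCases with
      | left j => simp
      | right j => simp
  · intro a b α
    refine col_ext ?_ ?_
    · rw [cL_mul, cL_mul_blk]
      show _ * pp1 (emb e d w) a = pp1 (emb e d w) b * _ + pp2 (emb e d w) b * _
      rw [pp1_emb, pp1_emb, pp2_emb, Matrix.mul_zero, Matrix.zero_mul, Matrix.one_mul,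
        show blk21 ((emb e d w).1 a b α) = blk21 (fbRep w.2.1 w.1 w.2.2 a b α) from rfl,
        show fbRep w.2.1 w.1 w.2.2 a b α = fb _ _ _ _ from rfl, blk21_fb, zero_add]
    · rw [cR_mul, cR_mul_blk]
      show _ * pp2 (emb e d w) a = pp1 (emb e d w) b * _ + pp2 (emb e d w) b * _
      rw [pp2_emb, pp1_emb, pp2_emb, Matrix.mul_one, Matrix.zero_mul, Matrix.one_mul,
        show blk22 ((emb e d w).1 a b α) = blk22 (fbRep w.2.1 w.1 w.2.2 a b α) from rfl,
        show fbRep w.2.1 w.1 w.2.2 a b α = fb _ _ _ _ from rfl, blk22_fb, zero_add]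
      rfl
  · intro x
    rw [pp2_emb]
    simp

lemma Gmap_emb (w : ExtSpace k V e d) : Gmap e d (emb e d w) = w := by
  obtain ⟨U, Vv, Z⟩ := w
  refine Prod.ext rfl (Prod.ext ?_ ?_)
  · funext a b α
    show blk11 (fbRep Vv U Z a b α) - blk12 (fbRep Vv U Z a b α)
        * (pp2 (emb e d (U, Vv, Z)) a)⁻¹ * pp1 (emb e d (U, Vv, Z)) a = Vv a b α
    erw [pp1_emb, pp2_emb, show (1 : Matrix (Fin (e a)) (Fin (e a)) k)⁻¹ = 1
      from Matrix.inv_eq_left_inv (by simp), Matrix.mul_zero,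
      show fbRep Vv U Z a b α = fb _ _ _ _ from rfl, blk11_fb, sub_zero]
  · funext a b α
    show blk12 (fbRep Vv U Z a b α) * (pp2 (emb e d (U, Vv, Z)) a)⁻¹ = Z a b α
    erw [pp2_emb, show (1 : Matrix (Fin (e a)) (Fin (e a)) k)⁻¹ = 1
      from Matrix.inv_eq_left_inv (by simp), Matrix.mul_one,
      show fbRep Vv U Z a b α = fb _ _ _ _ from rfl, blk12_fb]

lemma Gmap_image (R : Set (Rels k V)) :
    Gmap e d '' Sset R e d = extSet k V R e d := by
  apply Set.Subset.antisymm
  · rintro _ ⟨z, hz, rfl⟩; exact Gmap_mem_extSet R hz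
  · intro w hw; exact ⟨emb e d w, emb_mem R hw, Gmap_emb w⟩

lemma Sset_nonempty (R : Set (Rels k V)) : (Sset R e d).Nonempty :=
  ⟨emb e d _, emb_mem R (zero_mem_extSet R e d)⟩

end Geometry
section Topology

open Topology

open MvPolynomial in
lemma zariski_basic_open {k : Type u} [Field k] {ι : Type v} (p : MvPolynomial ι k) :
    IsOpen[zariskiTop k ι] {x | MvPolynomial.eval x p ≠ 0} :=
  TopologicalSpace.isOpen_generateFrom_of_mem ⟨p, rfl⟩

open MvPolynomial in
lemma zariski_rational_continuous {k : Type u} [Field k] {ι κ : Type v} {X : Type w}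
    (c : X → ι → k) (f g : κ → MvPolynomial ι k)
    (hg : ∀ x j, MvPolynomial.eval (c x) (g j) ≠ 0)
    (ψ : X → κ → k)
    (hψ : ∀ x j, ψ x j = MvPolynomial.eval (c x) (f j) / MvPolynomial.eval (c x) (g j)) :
    Continuous[(zariskiTop k ι).induced c, zariskiTop k κ] ψ := by
  letI : TopologicalSpace X := (zariskiTop k ι).induced c
  refine continuous_generateFrom_iff.mpr ?_
  rintro U ⟨q, rfl⟩
  obtain ⟨P, D, hD, h⟩ : ∃ P D : MvPolynomial ι k,
      (∀ x : X, MvPolynomial.eval (c x) D ≠ 0) ∧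
      ∀ x : X, MvPolynomial.eval (ψ x) q
        = MvPolynomial.eval (c x) P / MvPolynomial.eval (c x) D := by
    induction q using MvPolynomial.induction_on with
    | C a => exact ⟨MvPolynomial.C a, 1, fun x => by simp, fun x => by simp⟩
    | add q1 q2 ih1 ih2 =>
      obtain ⟨P1, D1, hD1, h1⟩ := ih1
      obtain ⟨P2, D2, hD2, h2⟩ := ih2
      refine ⟨P1 * D2 + P2 * D1, D1 * D2, fun x => by simp [hD1 x, hD2 x], fun x => ?_⟩
      rw [map_add, h1 x, h2 x]
      rw [map_add, map_mul, map_mul, map_mul]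
      rw [div_add_div _ _ (hD1 x) (hD2 x)]
      ring_nf
    | mul_X q j ih =>
      obtain ⟨P, D, hD, h⟩ := ih
      refine ⟨P * f j, D * g j, fun x => by simp [hD x, hg x j], fun x => ?_⟩
      rw [map_mul, h x, MvPolynomial.eval_X, hψ x j, map_mul, map_mul]
      rw [div_mul_div_comm]
  have hpre : ψ ⁻¹' {y | MvPolynomial.eval y q ≠ 0}
      = c ⁻¹' {v | MvPolynomial.eval v P ≠ 0} := by
    ext x
    simp only [Set.mem_preimage, Set.mem_setOf_eq, h x, div_ne_zero_iff]
    exact ⟨fun hh => hh.1, fun hh => ⟨hh, hD x⟩⟩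
  rw [hpre]
  exact ⟨_, zariski_basic_open P, rfl⟩

open MvPolynomial in
lemma zariski_rational_continuousOn {k : Type u} [Field k] {ι κ : Type v} {X : Type w}
    {Y : Type w'} (cX : X → ι → k) (cY : Y → κ → k) (F : X → Y) (S : Set X)
    (f g : κ → MvPolynomial ι k)
    (hg : ∀ x ∈ S, ∀ j, MvPolynomial.eval (cX x) (g j) ≠ 0)
    (hψ : ∀ x ∈ S, ∀ j, cY (F x) j
      = MvPolynomial.eval (cX x) (f j) / MvPolynomial.eval (cX x) (g j)) :
    @ContinuousOn X Y ((zariskiTop k ι).induced cX) ((zariskiTop k κ).induced cY) F S := by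
  letI tX : TopologicalSpace X := (zariskiTop k ι).induced cX
  letI tY : TopologicalSpace Y := (zariskiTop k κ).induced cY
  rw [continuousOn_iff_continuous_restrict]
  have h1 : (instTopologicalSpaceSubtype : TopologicalSpace ↥S)
      = (zariskiTop k ι).induced (cX ∘ (Subtype.val : ↥S → X)) := induced_compose
  rw [h1]
  apply continuous_induced_rng.2
  exact zariski_rational_continuous (cX ∘ (Subtype.val : ↥S → X)) f g
    (fun x j => hg x.1 x.2 j) (fun s => cY (F s.1)) (fun x j => hψ x.1 x.2 j)

lemma irreducible_inter_open {X : Type*} [TopologicalSpace X] {s u : Set X}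
    (hs : IsIrreducible s) (hu : IsOpen u) (hne : (s ∩ u).Nonempty) :
    IsIrreducible (s ∩ u) := by
  refine ⟨hne, fun a b ha hb h1 h2 => ?_⟩
  have h1' : (s ∩ (u ∩ a)).Nonempty := by
    obtain ⟨x, ⟨hxs, hxu⟩, hxa⟩ := h1
    exact ⟨x, hxs, hxu, hxa⟩
  have h2' : (s ∩ (u ∩ b)).Nonempty := by
    obtain ⟨x, ⟨hxs, hxu⟩, hxb⟩ := h2
    exact ⟨x, hxs, hxu, hxb⟩
  obtain ⟨x, hxs, ⟨hxu, hxa⟩, _, hxb⟩ :=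
    hs.2 (u ∩ a) (u ∩ b) (hu.inter ha) (hu.inter hb) h1' h2'
  exact ⟨x, ⟨hxs, hxu⟩, hxa, hxb⟩

end Topology
section Polys

open MvPolynomial

variable {k : Type u} [Field k] {V : Type} [Quiver.{0} V] {e d : V → ℕ}

variable (k e d) in
/-- Polynomial matrix of coordinates: top-left block of the big representation. -/
def PW11 {a b : V} (α : a ⟶ b) :
    Matrix (Fin (d b)) (Fin (d a)) (MvPolynomial (HomIdx V (fun x => d x + e x) e) k) :=
  Matrix.of fun i j =>
    MvPolynomial.X (Sum.inl ⟨a, b, α, (Fin.castAdd (e b) i, Fin.castAdd (e a) j)⟩)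

variable (k e d) in
/-- Polynomial matrix of coordinates: top-right block of the big representation. -/
def PW12 {a b : V} (α : a ⟶ b) :
    Matrix (Fin (d b)) (Fin (e a)) (MvPolynomial (HomIdx V (fun x => d x + e x) e) k) :=
  Matrix.of fun i j =>
    MvPolynomial.X (Sum.inl ⟨a, b, α, (Fin.castAdd (e b) i, Fin.natAdd (d a) j)⟩)

variable (k e d) in
/-- Polynomial matrix of coordinates: left block of the vertex map. -/
def Pp1 (x : V) :
    Matrix (Fin (e x)) (Fin (d x)) (MvPolynomial (HomIdx V (fun x => d x + e x) e) k) :=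
  Matrix.of fun i j => MvPolynomial.X (Sum.inr (Sum.inr ⟨x, (i, Fin.castAdd (e x) j)⟩))

variable (k e d) in
/-- Polynomial matrix of coordinates: right block of the vertex map. -/
def Pp2 (x : V) :
    Matrix (Fin (e x)) (Fin (e x)) (MvPolynomial (HomIdx V (fun x => d x + e x) e) k) :=
  Matrix.of fun i j => MvPolynomial.X (Sum.inr (Sum.inr ⟨x, (i, Fin.natAdd (d x) j)⟩))

lemma eval_PW11 (z : HomSpace k V (fun x => d x + e x) e) {a b : V} (α : a ⟶ b) :
    (PW11 k e d α).map (MvPolynomial.eval (homCoords z)) = blk11 (z.1 a b α) := by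
  ext i j; simp [PW11, Matrix.map_apply, homCoords, repCoords, blk11]; exact MvPolynomial.eval_X _

lemma eval_PW12 (z : HomSpace k V (fun x => d x + e x) e) {a b : V} (α : a ⟶ b) :
    (PW12 k e d α).map (MvPolynomial.eval (homCoords z)) = blk12 (z.1 a b α) := by
  ext i j; simp [PW12, Matrix.map_apply, homCoords, repCoords, blk12]; exact MvPolynomial.eval_X _

lemma eval_Pp1 (z : HomSpace k V (fun x => d x + e x) e) (x : V) :
    (Pp1 k e d x).map (MvPolynomial.eval (homCoords z)) = pp1 z x := by
  ext i j; simp [Pp1, Matrix.map_apply, homCoords, cL]; exact MvPolynomial.eval_X _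

lemma eval_Pp2 (z : HomSpace k V (fun x => d x + e x) e) (x : V) :
    (Pp2 k e d x).map (MvPolynomial.eval (homCoords z)) = pp2 z x := by
  ext i j; simp [Pp2, Matrix.map_apply, homCoords, cR]; exact MvPolynomial.eval_X _

lemma eval_det_Pp2 (z : HomSpace k V (fun x => d x + e x) e) (x : V) :
    MvPolynomial.eval (homCoords z) (Pp2 k e d x).det = (pp2 z x).det := by
  rw [RingHom.map_det]
  exact congrArg Matrix.det (eval_Pp2 z x)

lemma eval_adj_Pp2 (z : HomSpace k V (fun x => d x + e x) e) (x : V) :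
    ((Pp2 k e d x).adjugate).map (MvPolynomial.eval (homCoords z))
      = (pp2 z x).adjugate := by
  have h := RingHom.map_adjugate (MvPolynomial.eval (homCoords z)) (Pp2 k e d x)
  have h2 : (MvPolynomial.eval (homCoords z)).mapMatrix (Pp2 k e d x)
      = (Pp2 k e d x).map (MvPolynomial.eval (homCoords z)) := rfl
  rw [h2, eval_Pp2] at h
  exact h

variable (k e d) in
/-- Numerator polynomials for the coordinates of `Gmap`. -/
def fpoly : ExtIdx V e d → MvPolynomial (HomIdx V (fun x => d x + e x) e) k
  | Sum.inl i => MvPolynomial.X (Sum.inr (Sum.inl i))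
  | Sum.inr (Sum.inl i) =>
      (Pp2 k e d i.1).det * PW11 k e d i.2.2.1 i.2.2.2.1 i.2.2.2.2
        - (PW12 k e d i.2.2.1 * (Pp2 k e d i.1).adjugate * Pp1 k e d i.1)
            i.2.2.2.1 i.2.2.2.2
  | Sum.inr (Sum.inr i) =>
      (PW12 k e d i.2.2.1 * (Pp2 k e d i.1).adjugate) i.2.2.2.1 i.2.2.2.2

variable (k e d) in
/-- Denominator polynomials for the coordinates of `Gmap`. -/
def gpoly : ExtIdx V e d → MvPolynomial (HomIdx V (fun x => d x + e x) e) k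
  | Sum.inl _ => 1
  | Sum.inr (Sum.inl i) => (Pp2 k e d i.1).det
  | Sum.inr (Sum.inr i) => (Pp2 k e d i.1).det

lemma gpoly_ne_zero (z : HomSpace k V (fun x => d x + e x) e)
    (hdet : ∀ x, IsUnit (pp2 z x).det) (j : ExtIdx V e d) :
    MvPolynomial.eval (homCoords z) (gpoly k e d j) ≠ 0 := by
  match j with
  | Sum.inl i => simp [gpoly]
  | Sum.inr (Sum.inl i) =>
      rw [gpoly, eval_det_Pp2]
      exact (hdet i.1).ne_zero 
  | Sum.inr (Sum.inr i) =>
      rw [gpoly, eval_det_Pp2]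
      exact (hdet i.1).ne_zero

lemma Gmap_coords (z : HomSpace k V (fun x => d x + e x) e)
    (hdet : ∀ x, IsUnit (pp2 z x).det) (j : ExtIdx V e d) :
    extCoords (Gmap e d z) j = MvPolynomial.eval (homCoords z) (fpoly k e d j)
      / MvPolynomial.eval (homCoords z) (gpoly k e d j) := by
  match j with
  | Sum.inl i =>
      erw [fpoly, gpoly, map_one, div_one, MvPolynomial.eval_X]
      rfl
  | Sum.inr (Sum.inl i) =>
      obtain ⟨a, b, α, r, c⟩ := i
      have hne : (pp2 z a).det ≠ 0 := (hdet a).ne_zero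
      erw [fpoly, gpoly, map_sub, map_mul, eval_det_Pp2]
      have h1 : MvPolynomial.eval (homCoords z) (PW11 k e d α r c)
          = blk11 (z.1 a b α) r c := by
        rw [← eval_PW11 z α]; rfl
      have h2 : MvPolynomial.eval (homCoords z)
            ((PW12 k e d α * (Pp2 k e d a).adjugate * Pp1 k e d a) r c)
          = (blk12 (z.1 a b α) * (pp2 z a).adjugate * pp1 z a) r c := by
        have : ((PW12 k e d α * (Pp2 k e d a).adjugate * Pp1 k e d a).map
            (MvPolynomial.eval (homCoords z)))
            = blk12 (z.1 a b α) * (pp2 z a).adjugate * pp1 z a := by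
          rw [Matrix.map_mul, Matrix.map_mul, eval_PW12, eval_adj_Pp2, eval_Pp1]
        rw [← this]; rfl
      rw [h1, h2]
      show (blk11 (z.1 a b α) - blk12 (z.1 a b α) * (pp2 z a)⁻¹ * pp1 z a) r c = _
      rw [Matrix.inv_def, Ring.inverse_eq_inv, Matrix.mul_smul, Matrix.smul_mul,
        Matrix.sub_apply, Matrix.smul_apply, smul_eq_mul]
      field_simp
  | Sum.inr (Sum.inr i) =>
      obtain ⟨a, b, α, r, c⟩ := i
      have hne : (pp2 z a).det ≠ 0 := (hdet a).ne_zero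
      erw [fpoly, gpoly, eval_det_Pp2]
      have h2 : MvPolynomial.eval (homCoords z)
            ((PW12 k e d α * (Pp2 k e d a).adjugate) r c)
          = (blk12 (z.1 a b α) * (pp2 z a).adjugate) r c := by
        have : ((PW12 k e d α * (Pp2 k e d a).adjugate).map
            (MvPolynomial.eval (homCoords z)))
            = blk12 (z.1 a b α) * (pp2 z a).adjugate := by
          rw [Matrix.map_mul, eval_PW12, eval_adj_Pp2]
        rw [← this]; rfl
      rw [h2]
      show (blk12 (z.1 a b α) * (pp2 z a)⁻¹) r c = _
      rw [Matrix.inv_def, Ring.inverse_eq_inv, Matrix.mul_smul, Matrix.smul_apply,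
        smul_eq_mul]
      field_simp

end Polys

end Stmt7

open Stmt7 in
/-- If a finite-dimensional algebra `Λ`, given as the path algebra of a
bound quiver, is hom-irreducible, then `Λ` is ext-irreducible. -/
theorem homIrreducible_extIrreducible (k : Type u) [Field k] [IsAlgClosed k]
    (V : Type) [Quiver.{0} V] [Finite V] [∀ a b : V, Finite (a ⟶ b)]
    (R : Set (Rels k V)) (hbd : IsBoundQuiver k V R)
    (hhom : HomIrreducible k V R) :
    ExtIrreducible k V R := by
  intro e d
  letI : TopologicalSpace (HomSpace k V (fun x => d x + e x) e) :=
    homTop k V (fun x => d x + e x) e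
  letI : TopologicalSpace (ExtSpace k V e d) := extTop k V e d
  have hopen : IsOpen {z : HomSpace k V (fun x => d x + e x) e |
      ∀ x, IsUnit (pp2 z x).det} := by
    have heq : {z : HomSpace k V (fun x => d x + e x) e | ∀ x, IsUnit (pp2 z x).det}
        = ⋂ x : V, homCoords ⁻¹'
            {v | MvPolynomial.eval v (Pp2 k e d x).det ≠ 0} := by
      ext z
      simp only [Set.mem_iInter, Set.mem_preimage, Set.mem_setOf_eq, eval_det_Pp2,
        isUnit_iff_ne_zero]
    rw [heq]
    exact isOpen_iInter_of_finite fun x => ⟨_, zariski_basic_open _, rfl⟩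
  have hirr : IsIrreducible (Sset R e d) :=
    irreducible_inter_open (hhom (fun x => d x + e x) e) hopen (Sset_nonempty R)
  have hcont : ContinuousOn (Gmap e d) (Sset R e d) :=
    zariski_rational_continuousOn homCoords extCoords (Gmap e d) (Sset R e d)
      (fpoly k e d) (gpoly k e d)
      (fun z hz j => gpoly_ne_zero z hz.2 j)
      (fun z hz j => Gmap_coords z hz.2 j)
  have him := hirr.image (Gmap e d) hcont
  rw [Gmap_image R] at him
  exact him
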